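/- arXiv:2101.05121 — 2 statements merged into one kernel-verified Lean document; each statement's English description precedes it below -/
import Mathlib

section
/- Let T_t(x) = e^{itM} x e^{-itM} on B(H) where M is a bounded self-adjoint operator with pure point spectrum diagonalized by an orthonormal basis (e_n) with Me_n = λ_n e_n. If p is a projection and there exist a scalar μ ∈ ℂ and a net of times t_α → ∞ with weak*-lim T_{t_α}(p) = μ·1, then p = μ·1, and hence p = 0 or p = 1. -/
open Filter

/-- Let `T_t x = e^{itM} x e^{-itM}` where `M` is a bounded self-adjoint
operator diagonalized by an orthonormal (Hilbert) basis `(e_n)` with `M e_n = λ_n e_n`.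
If `p` is a projection, `μ ∈ ℂ`, and along a net of times `t_α → ∞` the operators
`T_{t_α}(p)` converge weakly* to `μ·1` (tested against the rank-one operators
`|e_k⟩⟨e_l|`), then `p = μ·1`; hence `p = 0` or `p = 1`. -/
theorem projection_weak_limit_scalar {H : Type*} [NormedAddCommGroup H]
    [InnerProductSpace ℂ H] [CompleteSpace H]
    (b : HilbertBasis ℕ ℂ H) (lam : ℕ → ℝ)
    (M : H →L[ℂ] H) (hM : IsSelfAdjoint M)
    (hMe : ∀ n, M (b n) = (lam n : ℂ) • b n)
    (U : ℝ → (H →L[ℂ] H))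
    (hUunitary : ∀ t, U t ∈ unitary (H →L[ℂ] H))
    (hUe : ∀ (t : ℝ) (n : ℕ), U t (b n) = Complex.exp (Complex.I * t * lam n) • b n)
    (T : ℝ → (H →L[ℂ] H) → (H →L[ℂ] H))
    (hT : ∀ (t : ℝ) (x : H →L[ℂ] H), T t x = U t * x * star (U t))
    (p : H →L[ℂ] H) (hpSA : IsSelfAdjoint p) (hpIdem : p * p = p)
    (μ : ℂ)
    {ι : Type*} (f : Filter ι) [f.NeBot] (ts : ι → ℝ)
    (hts : Tendsto ts f atTop)
    (hconv : ∀ k l : ℕ, Tendsto (fun a => (inner ℂ (b l) (T (ts a) p (b k)) : ℂ)) f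
      (nhds (μ * if l = k then 1 else 0))) :
    p = μ • 1 ∧ (p = 0 ∨ p = 1) := by
  have hUb : ∀ (t : ℝ) (n : ℕ),
      star (U t) (b n) = Complex.exp (-(Complex.I * t * lam n)) • b n := by
    intro t n
    have h1 : star (U t) * U t = 1 := (Unitary.mem_iff.mp (hUunitary t)).1
    have h2 : star (U t) (U t (b n)) = b n := by
      have := congrArg (fun (A : H →L[ℂ] H) => A (b n)) h1
      simpa using this
    rw [hUe t n, map_smul] at h2
    have hne : Complex.exp (Complex.I * t * lam n) ≠ 0 := Complex.exp_ne_zero _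
    have : star (U t) (b n) = (Complex.exp (Complex.I * t * lam n))⁻¹ • b n := by
      rw [eq_inv_smul_iff₀ hne]; exact h2
    rw [this, ← Complex.exp_neg]
  -- matrix element formula
  have hmat : ∀ (t : ℝ) (k l : ℕ),
      (inner ℂ (b l) (T t p (b k)) : ℂ)
        = Complex.exp (Complex.I * t * (lam l - lam k)) * inner ℂ (b l) (p (b k)) := by
    intro t k l
    rw [hT]
    have : (U t * p * star (U t)) (b k) = U t (p (star (U t) (b k))) := rfl
    rw [this, hUb t k, map_smul, map_smul, inner_smul_right]
    have hadj : (inner ℂ (b l) (U t (p (b k))) : ℂ)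
        = inner ℂ ((ContinuousLinearMap.adjoint (U t)) (b l)) (p (b k)) :=
      (ContinuousLinearMap.adjoint_inner_left (U t) (p (b k)) (b l)).symm
    rw [hadj, ← ContinuousLinearMap.star_eq_adjoint, hUb t l, inner_smul_left]
    rw [← Complex.exp_conj]
    have hc : (starRingEnd ℂ) (-(Complex.I * t * lam l)) = Complex.I * t * lam l := by
      simp [mul_comm]
    rw [hc, ← mul_assoc, ← Complex.exp_add]
    ring_nf
  -- diagonal entries
  have hdiag : ∀ k : ℕ, (inner ℂ (b k) (p (b k)) : ℂ) = μ := by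
    intro k
    have h1 := hconv k k
    simp only [eq_self_iff_true, if_true, mul_one] at h1
    have h2 : ∀ a, (inner ℂ (b k) (T (ts a) p (b k)) : ℂ) = inner ℂ (b k) (p (b k)) := by
      intro a; rw [hmat]; simp
    rw [show (fun a => (inner ℂ (b k) (T (ts a) p (b k)) : ℂ)) = fun _ => inner ℂ (b k) (p (b k))
      from funext h2] at h1
    exact (tendsto_nhds_unique tendsto_const_nhds h1)
  -- off-diagonal entries
  have hoff : ∀ k l : ℕ, l ≠ k → (inner ℂ (b l) (p (b k)) : ℂ) = 0 := by
    intro k l hlk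
    have h1 := hconv k l
    simp only [if_neg hlk, mul_zero] at h1
    have h2 : Tendsto (fun a => ‖(inner ℂ (b l) (T (ts a) p (b k)) : ℂ)‖) f (nhds 0) := by
      simpa using h1.norm
    have h3 : ∀ a, ‖(inner ℂ (b l) (T (ts a) p (b k)) : ℂ)‖ = ‖(inner ℂ (b l) (p (b k)) : ℂ)‖ := by
      intro a
      rw [hmat, norm_mul]
      have : ‖Complex.exp (Complex.I * (ts a) * (lam l - lam k))‖ = 1 := by
        rw [Complex.norm_exp]
        have : (Complex.I * (ts a) * (lam l - lam k)).re = 0 := by simp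
        rw [this, Real.exp_zero]
      rw [this, one_mul]
    rw [show (fun a => ‖(inner ℂ (b l) (T (ts a) p (b k)) : ℂ)‖)
        = fun _ => ‖(inner ℂ (b l) (p (b k)) : ℂ)‖ from funext h3] at h2
    have := tendsto_nhds_unique tendsto_const_nhds h2
    exact norm_eq_zero.mp this
  -- hence p (b k) = μ • b k for all k
  have hbk : ∀ k : ℕ, p (b k) = μ • b k := by
    intro k
    apply b.repr.injective
    ext l
    rw [b.repr_apply_apply, b.repr_apply_apply]
    rcases eq_or_ne l k with h | h
    · subst h
      rw [hdiag l, inner_smul_right]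
      have : (inner ℂ (b l) (b l) : ℂ) = 1 := by
        have := (orthonormal_iff_ite.mp b.orthonormal) l l
        simpa using this
      rw [this, mul_one]
    · rw [hoff k l h, inner_smul_right]
      have : (inner ℂ (b l) (b k) : ℂ) = 0 := b.orthonormal.2 h
      rw [this, mul_zero]
  -- hence p = μ • 1
  have hp : p = μ • 1 := by
    apply ContinuousLinearMap.ext_on
      (Submodule.dense_iff_topologicalClosure_eq_top.mpr b.dense_span)
    rintro x ⟨k, rfl⟩
    simp [hbk k]
  refine ⟨hp, ?_⟩
  -- μ² = μ
  have hb0 : b 0 ≠ 0 := by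
    intro h
    have := b.orthonormal.1 0
    rw [h] at this
    simp at this
  have hμ : μ * μ = μ := by
    have h1 : ((μ * μ) • (1 : H →L[ℂ] H)) (b 0) = (μ • (1 : H →L[ℂ] H)) (b 0) := by
      have : (μ • (1 : H →L[ℂ] H)) * (μ • 1) = μ • 1 := by rw [← hp]; exact hpIdem
      have h2 : (μ • (1 : H →L[ℂ] H)) * (μ • 1) = (μ * μ) • 1 := by
        simp [smul_mul_assoc, mul_smul_comm, mul_smul]
      rw [h2] at this
      rw [this]
    simp only [ContinuousLinearMap.smul_apply, ContinuousLinearMap.one_apply] at h1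
    have := sub_eq_zero.mpr h1
    rw [← sub_smul] at this
    rcases smul_eq_zero.mp this with h | h
    · exact sub_eq_zero.mp h
    · exact absurd h hb0
  have hμ01 : μ = 0 ∨ μ = 1 := by
    rcases mul_eq_zero.mp (show μ * (μ - 1) = 0 by linear_combination hμ) with h | h
    · exact Or.inl h
    · exact Or.inr (by linear_combination h)
  rcases hμ01 with h | h
  · left; rw [hp, h, zero_smul]
  · right; rw [hp, h, one_smul]
end

section
/- Let T_t act on B(K ⊗ F) by T_t(x ⊗ y) = e^{itK₀} x e^{-itK₀} ⊗ S_t(y) for bounded self-adjoint K₀ on K and a quantum Markov semigroup S_t on B(F). If x ⊗ y belongs to the decoherence-free subalgebra N(T) with x ≠ 0, then y belongs to N(S). -/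
/-- The decoherence-free subalgebra `N(T)` of a one-parameter family of maps on the
bounded operators of a Hilbert space. -/
def decoherenceFree {E : Type*} [NormedAddCommGroup E] [InnerProductSpace ℂ E]
    [CompleteSpace E] (T : ℝ → (E →L[ℂ] E) → (E →L[ℂ] E)) : Set (E →L[ℂ] E) :=
  {a | ∀ t : ℝ, 0 ≤ t →
    T t (star a * a) = star (T t a) * T t a ∧ T t (a * star a) = T t a * star (T t a)}

/-- Let `T_t` act on `B(K ⊗ F)` by
`T_t (x ⊗ y) = e^{itK₀} x e^{-itK₀} ⊗ S_t y` for a bounded self-adjoint `K₀` on `K` and a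
quantum Markov semigroup `(S_t)` on `B(F)` (the tensor embedding is encoded as a
`*`-multiplicative, unital map `tens` which is injective in the second variable against
nonzero first entries). If `x ⊗ y ∈ N(T)` with `x ≠ 0`, then `y ∈ N(S)`. -/
theorem second_factor_of_decoherenceFree {K F G : Type*}
    [NormedAddCommGroup K] [InnerProductSpace ℂ K] [CompleteSpace K]
    [NormedAddCommGroup F] [InnerProductSpace ℂ F] [CompleteSpace F]
    [NormedAddCommGroup G] [InnerProductSpace ℂ G] [CompleteSpace G]
    (tens : (K →L[ℂ] K) → (F →L[ℂ] F) → (G →L[ℂ] G))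
    (htensMul : ∀ a c : K →L[ℂ] K, ∀ b d : F →L[ℂ] F,
      tens a b * tens c d = tens (a * c) (b * d))
    (htensStar : ∀ (a : K →L[ℂ] K) (b : F →L[ℂ] F),
      star (tens a b) = tens (star a) (star b))
    (htensOne : tens 1 1 = 1)
    (htensInj : ∀ (c : K →L[ℂ] K) (z w : F →L[ℂ] F), c ≠ 0 → tens c z = tens c w → z = w)
    (K₀ : K →L[ℂ] K) (hK₀ : IsSelfAdjoint K₀)
    (U : ℝ → (K →L[ℂ] K))
    (hU : ∀ t : ℝ, U t = NormedSpace.exp ((Complex.I * (t : ℂ)) • K₀))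
    (S : ℝ → (F →L[ℂ] F) → (F →L[ℂ] F))
    (T : ℝ → (G →L[ℂ] G) → (G →L[ℂ] G))
    (hT : ∀ (t : ℝ) (x : K →L[ℂ] K) (y : F →L[ℂ] F),
      T t (tens x y) = tens (U t * x * star (U t)) (S t y))
    (hmult : ∀ t : ℝ, 0 ≤ t → ∀ a ∈ decoherenceFree T, ∀ b : G →L[ℂ] G,
      T t (b * a) = T t b * T t a ∧ T t (a * b) = T t a * T t b) :
    ∀ (x : K →L[ℂ] K) (y : F →L[ℂ] F), x ≠ 0 → tens x y ∈ decoherenceFree T →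
      y ∈ decoherenceFree S := by
  intro x y hx hxy
  -- U t is unitary
  have hUu : ∀ t : ℝ, U t * star (U t) = 1 ∧ star (U t) * U t = 1 := by
    intro t
    have hstar : star ((Complex.I * (t : ℂ)) • K₀) = -((Complex.I * (t : ℂ)) • K₀) := by
      rw [star_smul, hK₀.star_eq, ← neg_smul]
      congr 1
      simp [Complex.ext_iff]
    have hsU : star (U t) = NormedSpace.exp (-((Complex.I * (t : ℂ)) • K₀)) := by
      rw [hU t, NormedSpace.star_exp, hstar]
    letI : NormedAlgebra ℚ (K →L[ℂ] K) := NormedAlgebra.restrictScalars ℚ ℂ (K →L[ℂ] K)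
    constructor
    · rw [hsU, hU t, ← NormedSpace.exp_add_of_commute (Commute.neg_right (Commute.refl _)),
        add_neg_cancel, NormedSpace.exp_zero]
    · rw [hsU, hU t, ← NormedSpace.exp_add_of_commute (Commute.neg_left (Commute.refl _)),
        neg_add_cancel, NormedSpace.exp_zero]
  have hxsx : star x * x ≠ 0 := by
    intro h
    apply hx
    have := congrArg norm h
    rw [CStarRing.norm_star_mul_self, norm_zero] at this
    have : ‖x‖ = 0 := by nlinarith [norm_nonneg x]
    exact norm_eq_zero.mp this
  have hxxs : x * star x ≠ 0 := by
    intro h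
    apply hx
    have h' : star (star x) * star x = 0 := by rwa [star_star]
    have := congrArg norm h'
    rw [CStarRing.norm_star_mul_self, norm_zero] at this
    have : ‖star x‖ = 0 := by nlinarith [norm_nonneg (star x)]
    simpa using norm_eq_zero.mp this
  -- conjugation by U t preserves nonzeroness
  have hconj : ∀ (t : ℝ) (c : K →L[ℂ] K), c ≠ 0 → U t * c * star (U t) ≠ 0 := by
    intro t c hc h
    apply hc
    have := congrArg (fun z => star (U t) * z * U t) h
    simp only [mul_zero, zero_mul] at this
    calc c = (star (U t) * U t) * c * (star (U t) * U t) := by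
            rw [(hUu t).2, one_mul, mul_one]
      _ = star (U t) * (U t * c * star (U t)) * U t := by noncomm_ring
      _ = 0 := this
  intro t ht
  obtain ⟨h1, h2⟩ := hxy t ht
  rw [htensStar, htensMul, hT, hT, htensStar, htensMul] at h1 h2
  constructor
  · refine htensInj (U t * (star x * x) * star (U t)) _ _ (hconj t _ hxsx) ?_
    rw [h1]
    congr 1
    calc star (U t * x * star (U t)) * (U t * x * star (U t))
        = U t * star x * (star (U t) * U t) * x * star (U t) := by
          simp only [star_mul, star_star]; noncomm_ring
      _ = U t * (star x * x) * star (U t) := by rw [(hUu t).2]; simp only [mul_one]; noncomm_ring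
  · refine htensInj (U t * (x * star x) * star (U t)) _ _ (hconj t _ hxxs) ?_
    rw [h2]
    congr 1
    calc (U t * x * star (U t)) * star (U t * x * star (U t))
        = U t * x * (star (U t) * U t) * star x * star (U t) := by
          simp only [star_mul, star_star]; noncomm_ring
      _ = U t * (x * star x) * star (U t) := by rw [(hUu t).2]; simp only [mul_one]; noncomm_ring
end
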